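/- Let n, d be positive integers, y : Fin n → ℝ, and x : Fin n → Fin (d+1) → ℝ. The function f(p, q) = n log q + ∑_{i=1}^n (y_i q − ∑_{j=0}^d p_j x_{ij}) − ∑_{i=1}^n exp(y_i q − ∑_{j=0}^d p_j x_{ij}) is concave on the convex set {(p, q) ∈ ℝ^{d+1} × ℝ : q > 0}. -/

import Mathlib

open Finset

private lemma convexOn_finset_sum {E : Type*} [AddCommMonoid E] [Module ℝ E]
    {ι : Type*} (t : Finset ι) {s : Set E} (hs : Convex ℝ s) {f : ι → E → ℝ}
    (h : ∀ i ∈ t, ConvexOn ℝ s (f i)) :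
    ConvexOn ℝ s (fun x => ∑ i ∈ t, f i x) := by
  classical
  induction t using Finset.induction with
  | empty => simpa using convexOn_const 0 hs
  | insert a t' hnot ih =>
    simp only [Finset.sum_insert hnot]
    exact (h a (Finset.mem_insert_self a t')).add
      (ih fun i hi => h i (Finset.mem_insert_of_mem hi))

private def Lmap {n d : ℕ} (y : Fin n → ℝ) (x : Fin n → Fin (d + 1) → ℝ)
    (i : Fin n) : ((Fin (d + 1) → ℝ) × ℝ) →ₗ[ℝ] ℝ where
  toFun := fun pq => y i * pq.2 - ∑ j, pq.1 j * x i j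
  map_add' := by
    intro a b
    simp only [Prod.snd_add, Prod.fst_add, Pi.add_apply, mul_add, add_mul]
    rw [Finset.sum_add_distrib]; ring
  map_smul' := by
    intro c a
    simp only [Prod.smul_snd, Prod.smul_fst, Pi.smul_apply, smul_eq_mul,
      RingHom.id_apply]
    rw [mul_sub, Finset.mul_sum]
    congr 1
    · ring
    · exact Finset.sum_congr rfl fun j _ => by ring

/-- The reparametrized SEV log-likelihood is concave on the region `q > 0`. -/
theorem sev_loglik_concave (n d : ℕ) (hn : 0 < n) (hd : 0 < d)
    (y : Fin n → ℝ) (x : Fin n → Fin (d + 1) → ℝ) :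
    ConcaveOn ℝ {pq : (Fin (d + 1) → ℝ) × ℝ | 0 < pq.2}
      (fun pq => (n : ℝ) * Real.log pq.2
        + ∑ i, (y i * pq.2 - ∑ j, pq.1 j * x i j)
        - ∑ i, Real.exp (y i * pq.2 - ∑ j, pq.1 j * x i j)) := by
  have hSeq : {pq : (Fin (d + 1) → ℝ) × ℝ | 0 < pq.2}
      = (LinearMap.snd ℝ (Fin (d + 1) → ℝ) ℝ) ⁻¹' Set.Ioi 0 := rfl
  have hS : Convex ℝ {pq : (Fin (d + 1) → ℝ) × ℝ | 0 < pq.2} := by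
    rw [hSeq]; exact (convex_Ioi (0:ℝ)).linear_preimage _
  -- log term
  have hlog : ConcaveOn ℝ {pq : (Fin (d + 1) → ℝ) × ℝ | 0 < pq.2}
      (fun pq => (n : ℝ) * Real.log pq.2) := by
    have h1 := (strictConcaveOn_log_Ioi.concaveOn).comp_affineMap
      (LinearMap.snd ℝ (Fin (d + 1) → ℝ) ℝ).toAffineMap
    have h2 := h1.smul (c := (n : ℝ)) (by positivity)
    rw [hSeq]
    exact h2
  -- affine term
  have hlin : ConcaveOn ℝ {pq : (Fin (d + 1) → ℝ) × ℝ | 0 < pq.2}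
      (fun pq => ∑ i, (y i * pq.2 - ∑ j, pq.1 j * x i j)) := by
    have h1 := (∑ i, Lmap y x i).concaveOn hS
    have h3 : (fun pq : (Fin (d + 1) → ℝ) × ℝ => ∑ i, (y i * pq.2 - ∑ j, pq.1 j * x i j))
        = ⇑(∑ i, Lmap y x i) := by
      ext pq
      simp [Lmap]
    rw [h3]; exact h1
  -- exp term
  have hexp : ConvexOn ℝ {pq : (Fin (d + 1) → ℝ) × ℝ | 0 < pq.2}
      (fun pq => ∑ i, Real.exp (y i * pq.2 - ∑ j, pq.1 j * x i j)) := by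
    refine convexOn_finset_sum Finset.univ hS (fun i _ => ?_)
    have h1 := convexOn_exp.comp_affineMap (Lmap y x i).toAffineMap
    have hpre : ((Lmap y x i).toAffineMap ⁻¹' Set.univ) = Set.univ := by simp
    rw [hpre] at h1
    have h2 := h1.subset (Set.subset_univ _) hS
    exact h2
  have hfinal := (hlog.add hlin).sub hexp
  exact hfinal
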